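/- Let (V, ⟨−,−⟩, s) be a Serre lattice over ℚ with dim V ≤ 4. If s is unipotent, then rank(s − 1) ≤ 2 (i.e. the image of the linear map s − 1 has dimension at most 2). -/

import Mathlib

/-- a Serre lattice over ℚ of dimension at most 4 with unipotent Serre
automorphism satisfies `rank(s − 1) ≤ 2`. -/
theorem rank_le_two_of_unipotent (V : Type*) [AddCommGroup V] [Module ℚ V]
    [FiniteDimensional ℚ V]
    (B : V →ₗ[ℚ] V →ₗ[ℚ] ℚ) (hB : ∀ v, (∀ w, B v w = 0) → v = 0)
    (s : V →ₗ[ℚ] V) (hbij : Function.Bijective s)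
    (hserre : ∀ v w, B v (s w) = B w v)
    (hdim : Module.finrank ℚ V ≤ 4)
    (huni : (s - 1) ^ Module.finrank ℚ V = 0) :
    Module.finrank ℚ (LinearMap.range (s - 1)) ≤ 2 := by
  by_contra hlt
  push_neg at hlt
  set N : V →ₗ[ℚ] V := s - 1 with hN
  -- skew symmetry of (v, w) ↦ B v (N w)
  have hskew : ∀ v w : V, B v (N w) = - B w (N v) := by
    intro v w
    have h1 : B v (N w) = B w v - B v w := by
      simp [hN, hserre v w]
    have h2 : B w (N v) = B v w - B w v := by
      simp [hN, hserre w v]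
    rw [h1, h2]; ring
  -- right nondegeneracy of B
  have hBl : B.SeparatingLeft := hB
  have hBr : ∀ u : V, (∀ z : V, B z u = 0) → u = 0 := by
    have hfl : B.flip.SeparatingLeft := by
      classical
      let b := Module.finBasis ℚ V
      rw [LinearMap.separatingLeft_iff_det_ne_zero b] at hBl ⊢
      have htr : LinearMap.toMatrix₂ b b B.flip = (LinearMap.toMatrix₂ b b B).transpose := by
        ext i j
        simp [LinearMap.toMatrix₂_apply, Matrix.transpose_apply]
      rw [htr, Matrix.det_transpose]
      exact hBl
    intro u hu
    exact hfl u hu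
  -- counting: V nontrivial
  have hrankV : Module.finrank ℚ (LinearMap.range N) ≤ Module.finrank ℚ V :=
    Submodule.finrank_le _
  have hker_pos : LinearMap.ker N ≠ ⊥ := by
    intro hk
    have hinj : Function.Injective N := LinearMap.ker_eq_bot.mp hk
    have hnt : Nontrivial V := by
      have : 0 < Module.finrank ℚ V := lt_of_lt_of_le (by omega) hrankV
      exact Module.nontrivial_of_finrank_pos this
    obtain ⟨x, hx⟩ := exists_ne (0 : V)
    have hiter : (N ^ Module.finrank ℚ V) x = 0 := by rw [huni]; rfl
    have : Function.Injective ⇑(N ^ Module.finrank ℚ V) := by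
      rw [Module.End.coe_pow]
      exact Function.Injective.iterate hinj _
    exact hx (this (by simpa using hiter))
  have hker_ge : 1 ≤ Module.finrank ℚ (LinearMap.ker N) := by
    rcases Submodule.nonzero_mem_of_bot_lt (bot_lt_iff_ne_bot.mpr hker_pos) with ⟨x, hx⟩
    have : 0 < Module.finrank ℚ (LinearMap.ker N) :=
      Module.finrank_pos_iff.mpr ⟨⟨x, 0, by simpa using hx⟩⟩
    omega
  have hrn : Module.finrank ℚ (LinearMap.range N) + Module.finrank ℚ (LinearMap.ker N)
      = Module.finrank ℚ V := LinearMap.finrank_range_add_finrank_ker N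
  -- hence rank = 3, dim V = 4, dim ker = 1
  have hrank3 : Module.finrank ℚ (LinearMap.range N) = 3 := by omega
  have hker1 : Module.finrank ℚ (LinearMap.ker N) = 1 := by omega
  have hV4 : Module.finrank ℚ V = 4 := by omega
  -- complement W of ker N, of dimension 3
  obtain ⟨W, hW⟩ := (LinearMap.ker N).exists_isCompl
  have hW3 : Module.finrank ℚ W = 3 := by
    have := Submodule.finrank_add_eq_of_isCompl hW
    omega
  -- the alternating form C on W
  let C : W →ₗ[ℚ] W →ₗ[ℚ] ℚ :=
    LinearMap.compl₁₂ (B.compl₂ N) W.subtype W.subtype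
  have hCapp : ∀ x y : W, C x y = B (x : V) (N (y : V)) := fun x y => rfl
  -- C is separating left
  have hCsep : C.SeparatingLeft := by
    intro x hx
    have hxall : ∀ z : V, B (x : V) (N z) = 0 := by
      intro z
      have hz : z ∈ (LinearMap.ker N) ⊔ W := by rw [hW.sup_eq_top]; trivial
      obtain ⟨k, hk, w, hw, rfl⟩ := Submodule.mem_sup.mp hz
      have hk0 : N k = 0 := hk
      have := hx ⟨w, hw⟩
      rw [hCapp] at this
      simp [map_add, hk0, this]
    have hNx : N (x : V) = 0 := by
      apply hBr
      intro z
      rw [← neg_eq_zero, ← hskew]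
      exact hxall z
    have hxmem : (x : V) ∈ (LinearMap.ker N) ⊓ W := ⟨hNx, x.2⟩
    rw [hW.inf_eq_bot] at hxmem
    exact Subtype.ext hxmem
  -- but the Gram matrix of C is skew of odd size, so det = 0
  classical
  let b : Module.Basis (Fin (Module.finrank ℚ W)) ℚ W := Module.finBasis ℚ W
  have hdet := (LinearMap.separatingLeft_iff_det_ne_zero b).mp hCsep
  apply hdet
  set M : Matrix (Fin (Module.finrank ℚ W)) (Fin (Module.finrank ℚ W)) ℚ :=
    LinearMap.toMatrix₂ b b C with hM
  have hskewM : M.transpose = -M := by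
    ext i j
    simp only [Matrix.transpose_apply, Matrix.neg_apply, hM, LinearMap.toMatrix₂_apply]
    rw [hCapp, hCapp, hskew]
  have h1 : M.det = (-M).det := by rw [← hskewM, Matrix.det_transpose]
  rw [Matrix.det_neg, Fintype.card_fin] at h1
  have hpow : ((-1 : ℚ)) ^ Module.finrank ℚ W = -1 := by rw [hW3]; norm_num
  rw [hpow] at h1
  linarith
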